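/- For every natural number k ≥ 2 and all nonnegative integers a, b with a + b ≥ 1, one has κ(p^a)·κ(p^b) ≤ k²·κ(p^{a+b}) for every prime p. -/
import Mathlib


/-- For every natural number `k ≥ 2` and all nonnegative integers `a, b`
with `a + b ≥ 1`, one has `κ(p^a)·κ(p^b) ≤ k²·κ(p^{a+b})` for every prime `p`.
Here `κ = κ_k` is the multiplicative function with `κ(p^{uk+v}) = k·p^{-u-1/2}` for
`v = 1` and `κ(p^{uk+v}) = p^{-u-1}` for `2 ≤ v ≤ k`, and `κ 1 = 1`. -/
theorem stmt0 (k : ℕ) (hk : 2 ≤ k) (κ : ℕ → ℝ)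
    (hκ1 : κ 1 = 1)
    (hκmul : ∀ m n : ℕ, Nat.Coprime m n → κ (m * n) = κ m * κ n)
    (hκA : ∀ p : ℕ, p.Prime → ∀ u : ℕ,
      κ (p ^ (u * k + 1)) = (k : ℝ) * (p : ℝ) ^ (-(u : ℝ) - 1/2))
    (hκB : ∀ p : ℕ, p.Prime → ∀ u v : ℕ, 2 ≤ v → v ≤ k →
      κ (p ^ (u * k + v)) = (p : ℝ) ^ (-(u : ℝ) - 1))
    (p : ℕ) (hp : p.Prime) (a b : ℕ) (hab : 1 ≤ a + b) :
    κ (p ^ a) * κ (p ^ b) ≤ (k : ℝ) ^ 2 * κ (p ^ (a + b)) := by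
  have hk1 : (1:ℝ) ≤ (k:ℝ) := by exact_mod_cast (by omega : 1 ≤ k)
  have hp0 : (0:ℝ) < (p:ℝ) := by exact_mod_cast hp.pos
  have hp1 : (1:ℝ) ≤ (p:ℝ) := by exact_mod_cast hp.one_lt.le
  have hpow_pos : ∀ x:ℝ, (0:ℝ) < (p:ℝ)^x := fun x => Real.rpow_pos_of_pos hp0 x
  have hmono : ∀ x y:ℝ, x ≤ y → (p:ℝ)^x ≤ (p:ℝ)^y :=
    fun x y h => Real.rpow_le_rpow_of_exponent_le hp1 h
  have hadd : ∀ x y:ℝ, (p:ℝ)^x * (p:ℝ)^y = (p:ℝ)^(x+y) :=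
    fun x y => (Real.rpow_add hp0 x y).symm
  have hdecomp : ∀ n:ℕ, 1 ≤ n → ∃ u v:ℕ, n = u*k+v ∧ 1 ≤ v ∧ v ≤ k := by
    intro n hn
    refine ⟨(n-1)/k, (n-1)%k+1, ?_, by omega, ?_⟩
    · have h := Nat.div_add_mod (n-1) k
      calc n = (n-1) + 1 := by omega
        _ = (k*((n-1)/k) + (n-1)%k) + 1 := by rw [h]
        _ = (n-1)/k*k + ((n-1)%k+1) := by ring
    · have := Nat.mod_lt (n-1) (show 0 < k by omega)
      omega
  have hposκ : ∀ n:ℕ, 0 < κ (p^n) := by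
    intro n
    rcases Nat.eq_zero_or_pos n with h | h
    · subst h; simp [hκ1]
    · obtain ⟨u,v,rfl,h1,h2⟩ := hdecomp n h
      rcases eq_or_lt_of_le h1 with hv | hv
      · rw [← hv, hκA p hp u]
        positivity
      · rw [hκB p hp u v hv h2]
        exact hpow_pos _
  have hupper : ∀ u v:ℕ, 1 ≤ v → v ≤ k →
      κ (p^(u*k+v)) ≤ (k:ℝ) * (p:ℝ)^(-(u:ℝ)-1/2) := by
    intro u v h1 h2
    rcases eq_or_lt_of_le h1 with hv | hv
    · rw [← hv, hκA p hp u]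
    · rw [hκB p hp u v hv h2]
      calc (p:ℝ)^(-(u:ℝ)-1) ≤ (p:ℝ)^(-(u:ℝ)-1/2) := hmono _ _ (by linarith)
        _ ≤ (k:ℝ) * (p:ℝ)^(-(u:ℝ)-1/2) := le_mul_of_one_le_left (hpow_pos _).le hk1
  rcases Nat.eq_zero_or_pos a with ha | ha
  · subst ha
    simp only [pow_zero, hκ1, one_mul, zero_add]
    exact le_mul_of_one_le_left (hposκ b).le (by nlinarith [hk1])
  rcases Nat.eq_zero_or_pos b with hb | hb
  · subst hb
    simp only [pow_zero, hκ1, mul_one, add_zero]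
    exact le_mul_of_one_le_left (hposκ a).le (by nlinarith [hk1])
  obtain ⟨u1,v1,e1,hv11,hv1k⟩ := hdecomp a ha
  obtain ⟨u2,v2,e2,hv21,hv2k⟩ := hdecomp b hb
  by_cases hsum : v1 + v2 ≤ k
  · have ea : a + b = (u1+u2)*k + (v1+v2) := by rw [e1, e2]; ring
    rw [ea, hκB p hp (u1+u2) (v1+v2) (by omega) hsum, e1, e2]
    calc κ (p^(u1*k+v1)) * κ (p^(u2*k+v2))
        ≤ ((k:ℝ) * (p:ℝ)^(-(u1:ℝ)-1/2)) * ((k:ℝ) * (p:ℝ)^(-(u2:ℝ)-1/2)) := by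
          apply mul_le_mul (hupper u1 v1 hv11 hv1k) (hupper u2 v2 hv21 hv2k)
            (hposκ (u2*k+v2)).le (by positivity)
      _ = (k:ℝ)^2 * (p:ℝ)^(-(↑(u1+u2):ℝ)-1) := by
          rw [mul_mul_mul_comm, hadd,
            show (-(u1:ℝ)-1/2)+(-(u2:ℝ)-1/2) = (-(↑(u1+u2):ℝ)-1) by push_cast; ring]
          ring
  · have hL : κ (p^a) * κ (p^b) ≤ (k:ℝ) * (p:ℝ)^(-(u1:ℝ)-(u2:ℝ)-3/2) := by
      by_cases hv1 : v1 = 1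
      · have hv2 : v2 = k := by omega
        rw [e1, e2, hv1, hv2, hκA p hp u1, hκB p hp u2 k (by omega) le_rfl, mul_assoc, hadd,
          show (-(u1:ℝ)-1/2)+(-(u2:ℝ)-1) = -(u1:ℝ)-(u2:ℝ)-3/2 by ring]
      · have hv1' : 2 ≤ v1 := by omega
        rw [e1, e2, hκB p hp u1 v1 hv1' hv1k]
        calc (p:ℝ)^(-(u1:ℝ)-1) * κ (p^(u2*k+v2))
            ≤ (p:ℝ)^(-(u1:ℝ)-1) * ((k:ℝ) * (p:ℝ)^(-(u2:ℝ)-1/2)) :=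
              mul_le_mul_of_nonneg_left (hupper u2 v2 hv21 hv2k) (hpow_pos _).le
          _ = (k:ℝ) * (p:ℝ)^(-(u1:ℝ)-(u2:ℝ)-3/2) := by
              rw [mul_left_comm, hadd,
                show (-(u1:ℝ)-1)+(-(u2:ℝ)-1/2) = -(u1:ℝ)-(u2:ℝ)-3/2 by ring]
    by_cases hs1 : v1 + v2 = k + 1
    · have ea : a + b = (u1+u2+1)*k + 1 := by
        have h1 : a + b = u1*k + u2*k + (v1+v2) := by rw [e1, e2]; ring
        rw [h1, hs1]; ring
      rw [ea, hκA p hp (u1+u2+1),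
        show (-(↑(u1+u2+1):ℝ)-1/2) = -(u1:ℝ)-(u2:ℝ)-3/2 by push_cast; ring]
      exact hL.trans (le_mul_of_one_le_left (by positivity) (by nlinarith [hk1]))
    · have hv1' : 2 ≤ v1 := by omega
      have hv2' : 2 ≤ v2 := by omega
      have ea : a + b = (u1+u2+1)*k + (v1+v2-k) := by
        have h1 : a + b = u1*k + u2*k + (v1+v2) := by rw [e1, e2]; ring
        have h2 : (u1+u2+1)*k + (v1+v2-k) = u1*k + u2*k + (k + (v1+v2-k)) := by ring
        have h3 : k + (v1+v2-k) = v1+v2 := by omega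
        rw [h1, h2, h3]
      rw [ea, hκB p hp (u1+u2+1) (v1+v2-k) (by omega) (by omega), e1, e2,
        hκB p hp u1 v1 hv1' hv1k, hκB p hp u2 v2 hv2' hv2k, hadd,
        show (-(u1:ℝ)-1)+(-(u2:ℝ)-1) = (-(↑(u1+u2+1):ℝ)-1) by push_cast; ring]
      exact le_mul_of_one_le_left (hpow_pos _).le (by nlinarith [hk1])
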